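/- Restriction and covering of weak upper gradients: let p ∈ (1,∞), h : X → Y, and g ∈ L^p_loc(m). (a) If g is a weak upper gradient of h, then g|_U is a weak upper gradient of h|_U for every open U ⊆ X. (b) Conversely, if (U_i)_{i∈ℕ} is an open cover of X and g_i is a weak upper gradient of h|_{U_i} for each i, then g := sup_i ĝ_i (where ĝ_i denotes the extension of g_i by zero outside U_i) is a weak upper gradient of h, provided g ∈ L^p_loc(m). -/

import Mathlib

open MeasureTheory Set ENNReal Filter

/-- A curve in a metric space: a continuous map from a compact interval `[a,b]`. -/
structure Curve (X : Type*) [MetricSpace X] where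
  a : ℝ
  b : ℝ
  hab : a ≤ b
  toFun : ℝ → X
  cont : ContinuousOn toFun (Set.Icc a b)

namespace Curve

variable {X : Type*} [MetricSpace X]

/-- A curve is rectifiable if it has finite total variation. -/
def Rectifiable (γ : Curve X) : Prop :=
  eVariationOn γ.toFun (Set.Icc γ.a γ.b) ≠ ⊤

/-- The length of a curve: its total variation. -/
noncomputable def length (γ : Curve X) : ℝ :=
  (eVariationOn γ.toFun (Set.Icc γ.a γ.b)).toReal

/-- Arclength up to time `t`. -/
noncomputable def arclen (γ : Curve X) (t : ℝ) : ℝ :=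
  (eVariationOn γ.toFun (Set.Icc γ.a t)).toReal

/-- The unit speed parametrization of a curve. -/
noncomputable def unitParam (γ : Curve X) (s : ℝ) : X :=
  γ.toFun (sInf {t | t ∈ Set.Icc γ.a γ.b ∧ s ≤ γ.arclen t})

/-- The path integral `∫_γ ρ ds` of a Borel function along a curve, computed along
the unit speed parametrization. -/
noncomputable def pathIntegral (γ : Curve X) (ρ : X → ℝ≥0∞) : ℝ≥0∞ :=
  ∫⁻ s in Set.Icc 0 γ.length, ρ (γ.unitParam s)

/-- A curve is absolutely continuous if its increments are bounded by the integral of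
an integrable function. -/
def IsAC (γ : Curve X) : Prop :=
  ∃ h : ℝ → ℝ, IntegrableOn h (Set.Icc γ.a γ.b) ∧
    ∀ s t, γ.a ≤ s → s ≤ t → t ≤ γ.b →
      dist (γ.toFun s) (γ.toFun t) ≤ ∫ r in s..t, h r

/-- The image curve under a continuous map. -/
def map (γ : Curve X) {Y : Type*} [MetricSpace Y] (φ : X → Y) (hφ : Continuous φ) :
    Curve Y :=
  ⟨γ.a, γ.b, γ.hab, φ ∘ γ.toFun, hφ.comp_continuousOn γ.cont⟩

/-- A curve lies in a set `U`. -/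
def In (γ : Curve X) (U : Set X) : Prop :=
  ∀ t ∈ Set.Icc γ.a γ.b, γ.toFun t ∈ U

end Curve

/-- Admissibility of a Borel function for a curve family. -/
def Admissible {X : Type*} [MetricSpace X] [MeasurableSpace X]
    (ρ : X → ℝ≥0∞) (Γ : Set (Curve X)) : Prop :=
  Measurable ρ ∧ ∀ γ ∈ Γ, γ.Rectifiable → 1 ≤ γ.pathIntegral ρ

/-- The conformal `p`-modulus of a curve family. -/
noncomputable def PMod {X : Type*} [MetricSpace X] [MeasurableSpace X]
    (p : ℝ) (m : Measure X) (Γ : Set (Curve X)) : ℝ≥0∞ :=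
  ⨅ (ρ : X → ℝ≥0∞) (_ : Admissible ρ Γ), ∫⁻ x, ρ x ^ p ∂m

/-- `g` is a `p`-weak upper gradient of `h : X → Y`: the upper gradient inequality
holds along `Mod_p`-almost every curve. -/
def IsWUG {X : Type*} [MetricSpace X] [MeasurableSpace X] {Y : Type*} [PseudoMetricSpace Y]
    (p : ℝ) (m : Measure X) (h : X → Y) (g : X → ℝ≥0∞) : Prop :=
  Measurable g ∧ ∃ N : Set (Curve X), PMod p m N = 0 ∧
    ∀ γ : Curve X, γ ∉ N → γ.Rectifiable →
      ENNReal.ofReal (dist (h (γ.toFun γ.a)) (h (γ.toFun γ.b))) ≤ γ.pathIntegral g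

/-- `g` is a `p`-weak upper gradient of `h` on the set `U` (with respect to the
restricted measure and curves lying in `U`). -/
def IsWUGOn {X : Type*} [MetricSpace X] [MeasurableSpace X] {Y : Type*} [PseudoMetricSpace Y]
    (p : ℝ) (m : Measure X) (U : Set X) (h : X → Y) (g : X → ℝ≥0∞) : Prop :=
  Measurable g ∧ ∃ N : Set (Curve X), PMod p (m.restrict U) N = 0 ∧
    ∀ γ : Curve X, γ.In U → γ ∉ N → γ.Rectifiable →
      ENNReal.ofReal (dist (h (γ.toFun γ.a)) (h (γ.toFun γ.b))) ≤ γ.pathIntegral g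

/-- Local `p`-integrability of a nonnegative Borel function. -/
def LocPInt {X : Type*} [MetricSpace X] [MeasurableSpace X]
    (p : ℝ) (m : Measure X) (g : X → ℝ≥0∞) : Prop :=
  ∀ x : X, ∃ U : Set X, IsOpen U ∧ x ∈ U ∧ ∫⁻ y in U, g y ^ p ∂m < ⊤

/-- Local `p`-integrability on a subset. -/
def LocPIntOn {X : Type*} [MetricSpace X] [MeasurableSpace X]
    (p : ℝ) (m : Measure X) (U : Set X) (g : X → ℝ≥0∞) : Prop :=
  ∀ x ∈ U, ∃ V : Set X, IsOpen V ∧ x ∈ V ∧ ∫⁻ y in V ∩ U, g y ^ p ∂m < ⊤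

namespace Curve

variable {X : Type*} [MetricSpace X]

/-- Subcurve: restriction of a curve to a subinterval. -/
noncomputable def subc (γ : Curve X) (t₀ t₁ : ℝ) (h0 : γ.a ≤ t₀) (h01 : t₀ ≤ t₁)
    (h1 : t₁ ≤ γ.b) : Curve X :=
  ⟨t₀, t₁, h01, γ.toFun, γ.cont.mono (Set.Icc_subset_Icc h0 h1)⟩

lemma evar_ne_top {γ : Curve X} (hγ : γ.Rectifiable) {t₀ t₁ : ℝ} (h0 : γ.a ≤ t₀)
    (h1 : t₁ ≤ γ.b) : eVariationOn γ.toFun (Set.Icc t₀ t₁) ≠ ⊤ :=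
  fun h => hγ (top_le_iff.mp (h ▸ eVariationOn.mono _ (Set.Icc_subset_Icc h0 h1)))

lemma subc_rect {γ : Curve X} (hγ : γ.Rectifiable) {t₀ t₁ : ℝ} (h0 : γ.a ≤ t₀) (h01 : t₀ ≤ t₁)
    (h1 : t₁ ≤ γ.b) : (γ.subc t₀ t₁ h0 h01 h1).Rectifiable :=
  evar_ne_top hγ h0 h1

lemma arclen_add {γ : Curve X} (hγ : γ.Rectifiable) {t₀ t : ℝ} (h0 : γ.a ≤ t₀) (h01 : t₀ ≤ t)
    (h1 : t ≤ γ.b) :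
    γ.arclen t = γ.arclen t₀ + (eVariationOn γ.toFun (Set.Icc t₀ t)).toReal := by
  have key := eVariationOn.Icc_add_Icc γ.toFun (s := Set.univ) h0 h01 (Set.mem_univ t₀)
  simp only [Set.univ_inter] at key
  rw [arclen, arclen, ← key,
    ENNReal.toReal_add (evar_ne_top hγ le_rfl (h01.trans h1)) (evar_ne_top hγ h0 h1)]

lemma arclen_mono {γ : Curve X} (hγ : γ.Rectifiable) {t₀ t : ℝ} (h0 : γ.a ≤ t₀) (h01 : t₀ ≤ t)
    (h1 : t ≤ γ.b) : γ.arclen t₀ ≤ γ.arclen t := by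
  rw [arclen_add hγ h0 h01 h1]; exact le_add_of_nonneg_right ENNReal.toReal_nonneg

lemma arclen_a (γ : Curve X) : γ.arclen γ.a = 0 := by
  rw [arclen, Set.Icc_self, eVariationOn.subsingleton _ (Set.subsingleton_singleton),
    ENNReal.toReal_zero]

lemma arclen_b (γ : Curve X) : γ.arclen γ.b = γ.length := rfl

lemma arclen_nonneg (γ : Curve X) (t : ℝ) : 0 ≤ γ.arclen t := ENNReal.toReal_nonneg

lemma unitParam_mem {γ : Curve X} {U : Set X} (hU : γ.In U) {s : ℝ} (hs : s ≤ γ.length) :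
    γ.unitParam s ∈ U := by
  have hb : γ.b ∈ {t | t ∈ Set.Icc γ.a γ.b ∧ s ≤ γ.arclen t} := ⟨⟨γ.hab, le_rfl⟩, hs⟩
  have hbdd : BddBelow {t | t ∈ Set.Icc γ.a γ.b ∧ s ≤ γ.arclen t} :=
    ⟨γ.a, fun t ht => ht.1.1⟩
  exact hU _ ⟨le_csInf ⟨_, hb⟩ fun t ht => ht.1.1, csInf_le hbdd hb⟩

end Curve
lemma lintegral_Ioc_shift (F : ℝ → ℝ≥0∞) (c L : ℝ) :
    ∫⁻ u in Set.Ioc c (c + L), F u = ∫⁻ s in Set.Ioc 0 L, F (s + c) := by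
  have e : MeasurableEmbedding (fun x : ℝ => x + c) := measurableEmbedding_addRight c
  have h1 := Measure.restrict_map (μ := (volume : Measure ℝ)) e.measurable
    (measurableSet_Ioc (a := c) (b := c + L))
  rw [map_add_right_eq_self] at h1
  have h2 : (fun x : ℝ => x + c) ⁻¹' Set.Ioc c (c + L) = Set.Ioc 0 L := by
    ext x
    simp only [Set.mem_preimage, Set.mem_Ioc]
    constructor <;> rintro ⟨hx1, hx2⟩ <;> constructor <;> linarith
  rw [h2] at h1
  rw [h1, e.lintegral_map]
namespace Curve

variable {X : Type*} [MetricSpace X]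

lemma pathIntegral_subc {γ : Curve X} (hγ : γ.Rectifiable) {t₀ t₁ : ℝ}
    (h0 : γ.a ≤ t₀) (h01 : t₀ ≤ t₁) (h1 : t₁ ≤ γ.b) (ρ : X → ℝ≥0∞) :
    (γ.subc t₀ t₁ h0 h01 h1).pathIntegral ρ
      = ∫⁻ u in Set.Ioc (γ.arclen t₀) (γ.arclen t₁), ρ (γ.unitParam u) := by
  set δ := γ.subc t₀ t₁ h0 h01 h1 with hδ
  set c := γ.arclen t₀ with hc
  have harc : ∀ t, t₀ ≤ t → t ≤ γ.b → γ.arclen t = c + δ.arclen t := fun t ht0 htb =>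
    arclen_add hγ h0 ht0 htb
  have hlen : γ.arclen t₁ = c + δ.length := harc t₁ h01 h1
  have key : ∀ s ∈ Set.Ioc (0:ℝ) δ.length, δ.unitParam s = γ.unitParam (s + c) := by
    intro s hs
    set Aδ := {t | t ∈ Set.Icc δ.a δ.b ∧ s ≤ δ.arclen t} with hAδ
    set Aγ := {t | t ∈ Set.Icc γ.a γ.b ∧ s + c ≤ γ.arclen t} with hAγ
    have hsub : Aδ ⊆ Aγ := by
      rintro t ⟨⟨ht0, ht1⟩, hst⟩
      have ht1' : t ≤ γ.b := le_trans ht1 h1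
      exact ⟨⟨h0.trans ht0, ht1'⟩, by rw [harc t ht0 ht1']; linarith⟩
    have ht₁ : t₁ ∈ Aδ := ⟨⟨h01, le_rfl⟩, hs.2⟩
    have hbddγ : BddBelow Aγ := ⟨γ.a, fun t ht => ht.1.1⟩
    have hbddδ : BddBelow Aδ := hbddγ.mono hsub
    have hsets : sInf Aδ = sInf Aγ := by
      apply le_antisymm
      · refine le_csInf ⟨t₁, hsub ht₁⟩ fun t ht => ?_
        rcases le_or_gt t₀ t with h | h
        · rcases le_or_gt t t₁ with h' | h'
          · refine csInf_le hbddδ ⟨⟨h, h'⟩, ?_⟩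
            have := harc t h ht.1.2
            have := ht.2
            linarith
          · exact (csInf_le hbddδ ht₁).trans h'.le
        · exfalso
          have h2 : γ.arclen t ≤ c := arclen_mono hγ ht.1.1 h.le (h01.trans h1)
          have := ht.2
          have := hs.1
          linarith
      · exact csInf_le_csInf hbddγ ⟨t₁, ht₁⟩ hsub
    show γ.toFun (sInf Aδ) = γ.toFun (sInf Aγ)
    rw [hsets]
  calc δ.pathIntegral ρ = ∫⁻ s in Set.Ioc 0 δ.length, ρ (δ.unitParam s) := by
        rw [Curve.pathIntegral, ← Measure.restrict_congr_set Ioc_ae_eq_Icc]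
    _ = ∫⁻ s in Set.Ioc 0 δ.length, ρ (γ.unitParam (s + c)) := by
        exact setLIntegral_congr_fun measurableSet_Ioc (fun s hs => congrArg ρ (key s hs))
    _ = ∫⁻ u in Set.Ioc c (c + δ.length), ρ (γ.unitParam u) :=
        (lintegral_Ioc_shift (fun u => ρ (γ.unitParam u)) c δ.length).symm
    _ = ∫⁻ u in Set.Ioc (γ.arclen t₀) (γ.arclen t₁), ρ (γ.unitParam u) := by
        rw [← hlen, ← hc]

end Curve
lemma lintegral_Ioc_sum (F : ℝ → ℝ≥0∞) {c : ℕ → ℝ} (hc : Monotone c) :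
    ∀ n : ℕ, ∑ k ∈ Finset.range n, ∫⁻ u in Set.Ioc (c k) (c (k + 1)), F u
      = ∫⁻ u in Set.Ioc (c 0) (c n), F u := by
  intro n
  induction n with
  | zero => simp
  | succ n ih =>
      rw [Finset.sum_range_succ, ih, ← lintegral_union measurableSet_Ioc
        (Set.Ioc_disjoint_Ioc_of_le le_rfl), Set.Ioc_union_Ioc_eq_Ioc (hc (Nat.zero_le n))
        (hc (Nat.le_succ n))]

namespace Curve

variable {X : Type*} [MetricSpace X]

lemma pathIntegral_Ioc (γ : Curve X) (ρ : X → ℝ≥0∞) :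
    γ.pathIntegral ρ = ∫⁻ s in Set.Ioc 0 γ.length, ρ (γ.unitParam s) := by
  rw [Curve.pathIntegral, ← Measure.restrict_congr_set Ioc_ae_eq_Icc]

lemma pathIntegral_subc_le {γ : Curve X} (hγ : γ.Rectifiable) {t₀ t₁ : ℝ}
    (h0 : γ.a ≤ t₀) (h01 : t₀ ≤ t₁) (h1 : t₁ ≤ γ.b) (ρ : X → ℝ≥0∞) :
    (γ.subc t₀ t₁ h0 h01 h1).pathIntegral ρ ≤ γ.pathIntegral ρ := by
  rw [pathIntegral_subc hγ h0 h01 h1, pathIntegral_Ioc]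
  refine lintegral_mono_set (Set.Ioc_subset_Ioc ?_ ?_)
  · exact γ.arclen_nonneg t₀
  · exact arclen_mono hγ (h0.trans h01) h1 le_rfl

end Curve

section Mod

variable {X : Type*} [MetricSpace X] [MeasurableSpace X] {p : ℝ} {m : Measure X}

lemma PMod_le_lintegral {Γ : Set (Curve X)} {ρ : X → ℝ≥0∞} (h : Admissible ρ Γ) :
    PMod p m Γ ≤ ∫⁻ x, ρ x ^ p ∂m :=
  iInf₂_le ρ h

lemma PMod_le_of_admissible {Γ Γ' : Set (Curve X)}
    (H : ∀ ρ, Admissible ρ Γ → Admissible ρ Γ') : PMod p m Γ' ≤ PMod p m Γ :=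
  le_iInf₂ fun ρ hρ => iInf₂_le ρ (H ρ hρ)

lemma PMod_mono {Γ Γ' : Set (Curve X)} (h : Γ' ⊆ Γ) : PMod p m Γ' ≤ PMod p m Γ :=
  PMod_le_of_admissible fun ρ hρ => ⟨hρ.1, fun γ hγ => hρ.2 γ (h hγ)⟩

lemma PMod_restrict_le (U : Set X) (Γ : Set (Curve X)) :
    PMod p (m.restrict U) Γ ≤ PMod p m Γ :=
  iInf_mono fun ρ => iInf_mono fun _ => setLIntegral_le_lintegral _ _

lemma PMod_le_restrict (hp : 0 < p) {U : Set X} (hU : MeasurableSet U) {Γ : Set (Curve X)}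
    (hΓ : ∀ γ ∈ Γ, γ.In U) : PMod p m Γ ≤ PMod p (m.restrict U) Γ := by
  refine le_iInf₂ fun ρ hρ => ?_
  have adm' : Admissible (U.indicator ρ) Γ := by
    refine ⟨hρ.1.indicator hU, fun γ hγ hrect => ?_⟩
    refine (hρ.2 γ hγ hrect).trans (le_of_eq ?_)
    unfold Curve.pathIntegral
    refine setLIntegral_congr_fun measurableSet_Icc (fun s hs => ?_)
    rw [Set.indicator_of_mem (Curve.unitParam_mem (hΓ γ hγ) hs.2)]
  refine (PMod_le_lintegral adm').trans (le_of_eq ?_)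
  have hpow : ∀ x, U.indicator ρ x ^ p = U.indicator (fun x => ρ x ^ p) x := by
    intro x
    by_cases hx : x ∈ U
    · rw [Set.indicator_of_mem hx, Set.indicator_of_mem hx]
    · rw [Set.indicator_of_notMem hx, Set.indicator_of_notMem hx,
        ENNReal.zero_rpow_of_pos hp]
  simp_rw [hpow]
  rw [lintegral_indicator hU]

lemma PMod_iUnion_null (hp : 0 < p) {Γ : ℕ → Set (Curve X)}
    (hΓ : ∀ i, PMod p m (Γ i) = 0) : PMod p m (⋃ i, Γ i) = 0 := by
  refine le_antisymm ?_ zero_le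
  refine ENNReal.le_of_forall_pos_le_add fun ε hε _ => ?_
  rw [zero_add]
  have hchoice : ∀ i : ℕ, ∃ ρ : X → ℝ≥0∞, Admissible ρ (Γ i) ∧
      ∫⁻ x, ρ x ^ p ∂m ≤ ε * (2 : ℝ≥0∞)⁻¹ ^ (i + 1) := by
    intro i
    have hpos : (0 : ℝ≥0∞) < ε * (2 : ℝ≥0∞)⁻¹ ^ (i + 1) := by
      apply ENNReal.mul_pos
      · exact_mod_cast hε.ne'
      · exact pow_ne_zero _ (by norm_num)
    have := hΓ i ▸ hpos
    rw [PMod, iInf_lt_iff] at this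
    obtain ⟨ρ, hρ⟩ := this
    rw [iInf_lt_iff] at hρ
    obtain ⟨hadm, hlt⟩ := hρ
    exact ⟨ρ, hadm, hlt.le⟩
  choose ρ hadm hsmall using hchoice
  have hmeas : Measurable fun x => ⨆ i, ρ i x := Measurable.iSup fun i => (hadm i).1
  have hadm' : Admissible (fun x => ⨆ i, ρ i x) (⋃ i, Γ i) := by
    refine ⟨hmeas, fun γ hγ hrect => ?_⟩
    obtain ⟨i, hi⟩ := Set.mem_iUnion.mp hγ
    refine ((hadm i).2 γ hi hrect).trans (lintegral_mono fun s => ?_)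
    exact le_iSup (fun j => ρ j (γ.unitParam s)) i
  refine (PMod_le_lintegral hadm').trans ?_
  have hbound : ∀ x, (⨆ i, ρ i x) ^ p ≤ ∑' i, ρ i x ^ p := by
    intro x
    have h1 : (⨆ i, ρ i x) ^ p = ⨆ i, ρ i x ^ p := by
      have h := (ENNReal.orderIsoRpow p hp).map_iSup fun i => ρ i x
      simp only [ENNReal.orderIsoRpow_apply] at h
      exact h
    rw [h1]
    exact iSup_le fun i => ENNReal.le_tsum i
  calc ∫⁻ x, (⨆ i, ρ i x) ^ p ∂m ≤ ∫⁻ x, ∑' i, ρ i x ^ p ∂m := lintegral_mono hbound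
    _ = ∑' i, ∫⁻ x, ρ i x ^ p ∂m :=
        lintegral_tsum fun i => ((hadm i).1.pow_const p).aemeasurable
    _ ≤ ∑' i : ℕ, ε * (2 : ℝ≥0∞)⁻¹ ^ (i + 1) := ENNReal.tsum_le_tsum hsmall
    _ = ε := by
        simp_rw [pow_succ', ENNReal.tsum_mul_left]
        rw [ENNReal.tsum_geometric]
        rw [ENNReal.one_sub_inv_two, inv_inv,
          ENNReal.inv_mul_cancel (by norm_num) (by norm_num), mul_one]

end Mod
open Classical in
/-- Restriction and covering of weak upper gradients:
(a) a weak upper gradient of `h` restricts to a weak upper gradient of `h` on every open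
set; (b) if `(U_i)` is an open cover of `X` and `g_i` is a weak upper gradient of `h`
on `U_i` for each `i`, then the pointwise supremum of the zero-extensions, provided it
is locally `p`-integrable, is a weak upper gradient of `h` on `X`. -/
theorem restrict_and_cover_wug {X : Type*} [MetricSpace X] [MeasurableSpace X] [BorelSpace X]
    {Y : Type*} [PseudoMetricSpace Y]
    (p : ℝ) (hp : 1 < p) (m : Measure X) (h : X → Y) :
    (∀ g : X → ℝ≥0∞, LocPInt p m g → IsWUG p m h g →
      ∀ U : Set X, IsOpen U → IsWUGOn p m U h g) ∧
    (∀ (U : ℕ → Set X) (g : ℕ → X → ℝ≥0∞),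
      (∀ i, IsOpen (U i)) → (⋃ i, U i) = Set.univ →
      (∀ i, IsWUGOn p m (U i) h (g i)) →
      LocPInt p m (fun x => ⨆ i, if x ∈ U i then g i x else 0) →
      IsWUG p m h (fun x => ⨆ i, if x ∈ U i then g i x else 0)) := by
  constructor
  · -- Part (a)
    intro g _ hwug U hU
    obtain ⟨hg, N, hN, hineq⟩ := hwug
    refine ⟨hg, N, le_antisymm ((PMod_restrict_le U N).trans_eq hN) zero_le,
      fun γ _ hγN hrect => hineq γ hγN hrect⟩
  · -- Part (b)
    intro U g hopen hcover hwug _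
    have hp0 : (0:ℝ) < p := lt_trans one_pos hp
    set G : X → ℝ≥0∞ := fun x => ⨆ i, if x ∈ U i then g i x else 0 with hG
    have hGmeas : Measurable G := Measurable.iSup fun i =>
      Measurable.ite (hopen i).measurableSet (hwug i).1 measurable_const
    have hNex : ∀ i, ∃ N : Set (Curve X), PMod p (m.restrict (U i)) N = 0 ∧
        ∀ γ : Curve X, γ.In (U i) → γ ∉ N → γ.Rectifiable →
          ENNReal.ofReal (dist (h (γ.toFun γ.a)) (h (γ.toFun γ.b))) ≤ γ.pathIntegral (g i) :=
      fun i => (hwug i).2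
    choose N hNnull hNineq using hNex
    set M : ℕ → Set (Curve X) := fun i => {γ | γ.In (U i) ∧ γ ∈ N i} with hM
    set S : ℕ → Set (Curve X) := fun i =>
      {γ | ∃ t₀ t₁ h0 h01 h1, Curve.subc γ t₀ t₁ h0 h01 h1 ∈ M i} with hS
    have hMnull : ∀ i, PMod p m (M i) = 0 := fun i =>
      le_antisymm (((PMod_le_restrict hp0 (hopen i).measurableSet
        (fun γ hγ => hγ.1)).trans (PMod_mono fun γ hγ => hγ.2)).trans_eq (hNnull i)) zero_le
    have hSnull : ∀ i, PMod p m (S i) = 0 := by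
      intro i
      refine le_antisymm ((PMod_le_of_admissible ?_).trans_eq (hMnull i)) zero_le
      rintro ρ ⟨hρm, hρ⟩
      refine ⟨hρm, ?_⟩
      rintro γ ⟨t₀, t₁, h0, h01, h1, hδ⟩ hrect
      exact (hρ _ hδ (Curve.subc_rect hrect h0 h01 h1)).trans
        (Curve.pathIntegral_subc_le hrect h0 h01 h1 ρ)
    refine ⟨hGmeas, ⋃ i, S i, PMod_iUnion_null hp0 hSnull, ?_⟩
    intro γ hγN hrect
    -- Lebesgue number and uniform continuity
    have hKcomp : IsCompact (γ.toFun '' Set.Icc γ.a γ.b) :=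
      isCompact_Icc.image_of_continuousOn γ.cont
    obtain ⟨r, hr, hball⟩ := lebesgue_number_lemma_of_metric hKcomp hopen
      (by rw [hcover]; exact Set.subset_univ _)
    have huc := (isCompact_Icc (a := γ.a) (b := γ.b)).uniformContinuousOn_of_continuous γ.cont
    rw [Metric.uniformContinuousOn_iff] at huc
    obtain ⟨d, hd, hdist⟩ := huc r hr
    obtain ⟨n', hn'⟩ := exists_nat_gt ((γ.b - γ.a) / d)
    set n : ℕ := n' + 1 with hn
    have hnpos : (0:ℝ) < n := by positivity
    have hnn : (γ.b - γ.a) / d < (n:ℝ) := hn'.trans_le (by exact_mod_cast Nat.le_succ n')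
    have hstep : (γ.b - γ.a) / n < d := by
      rw [div_lt_iff₀ hnpos]
      calc γ.b - γ.a = (γ.b - γ.a) / d * d := by field_simp
        _ < n * d := mul_lt_mul_of_pos_right hnn hd
        _ = d * n := mul_comm _ _
    -- the partition
    set t : ℕ → ℝ := fun k => γ.a + k * ((γ.b - γ.a) / n) with ht
    have hst0 : 0 ≤ (γ.b - γ.a) / n := div_nonneg (sub_nonneg.2 γ.hab) hnpos.le
    have tmono : Monotone t := fun j k hjk => add_le_add_right
      (mul_le_mul_of_nonneg_right (Nat.cast_le.2 hjk) hst0) _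
    have ht0 : t 0 = γ.a := by simp [ht]
    have htn : t n = γ.b := by rw [ht]; field_simp; ring
    have htmem : ∀ k, k ≤ n → t k ∈ Set.Icc γ.a γ.b := by
      intro k hk
      constructor
      · rw [ht]; exact le_add_of_nonneg_right (by positivity)
      · rw [← htn]; exact tmono hk
    have hgap : ∀ k, t (k + 1) - t k = (γ.b - γ.a) / n := by
      intro k; rw [ht]; push_cast; ring
    -- choice of covering indices
    have hIex : ∀ k, k < n → ∃ i, ∀ u ∈ Set.Icc (t k) (t (k + 1)), γ.toFun u ∈ U i := by
      intro k hk
      have hk1 : k + 1 ≤ n := hk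
      have htk := htmem k hk.le
      obtain ⟨i, hi⟩ := hball (γ.toFun (t k)) (Set.mem_image_of_mem _ htk)
      refine ⟨i, fun u hu => ?_⟩
      have hum : u ∈ Set.Icc γ.a γ.b :=
        ⟨htk.1.trans hu.1, hu.2.trans (htmem (k + 1) hk1).2⟩
      refine hi ?_
      refine Metric.mem_ball.mpr (hdist u hum (t k) htk ?_)
      rw [Real.dist_eq, abs_of_nonneg (sub_nonneg.2 hu.1)]
      calc u - t k ≤ t (k + 1) - t k := by linarith [hu.2]
        _ = (γ.b - γ.a) / n := hgap k
        _ < d := hstep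
    choose I hI using hIex
    -- per-piece estimate
    have hpiece : ∀ k, (hk : k < n) →
        ENNReal.ofReal (dist (h (γ.toFun (t k))) (h (γ.toFun (t (k + 1)))))
          ≤ ∫⁻ u in Set.Ioc (γ.arclen (t k)) (γ.arclen (t (k + 1))), G (γ.unitParam u) := by
      intro k hk
      have h0k : γ.a ≤ t k := (htmem k hk.le).1
      have h01k : t k ≤ t (k + 1) := tmono (Nat.le_succ k)
      have h1k : t (k + 1) ≤ γ.b := (htmem (k + 1) hk).2
      set δ := γ.subc (t k) (t (k + 1)) h0k h01k h1k with hδdef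
      have hIn : δ.In (U (I k hk)) := fun u hu => hI k hk u hu
      have hδrect : δ.Rectifiable := Curve.subc_rect hrect h0k h01k h1k
      have hnotN : δ ∉ N (I k hk) := by
        intro hmem
        exact hγN (Set.mem_iUnion.mpr
          ⟨I k hk, ⟨t k, t (k + 1), h0k, h01k, h1k, ⟨hIn, hmem⟩⟩⟩)
      have h1 := hNineq (I k hk) δ hIn hnotN hδrect
      have h2 : δ.pathIntegral (g (I k hk)) ≤ δ.pathIntegral G := by
        unfold Curve.pathIntegral
        refine setLIntegral_mono' measurableSet_Icc fun s hs => ?_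
        have hx : δ.unitParam s ∈ U (I k hk) := Curve.unitParam_mem hIn hs.2
        calc g (I k hk) (δ.unitParam s)
            = if δ.unitParam s ∈ U (I k hk) then g (I k hk) (δ.unitParam s) else 0 := by
              rw [if_pos hx]
          _ ≤ G (δ.unitParam s) :=
              le_iSup (fun i => if δ.unitParam s ∈ U i then g i (δ.unitParam s) else 0) (I k hk)
      have h3 : δ.pathIntegral G
          = ∫⁻ u in Set.Ioc (γ.arclen (t k)) (γ.arclen (t (k + 1))), G (γ.unitParam u) :=
        Curve.pathIntegral_subc hrect h0k h01k h1k G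
      exact (h1.trans h2).trans_eq h3
    -- summing up
    set c : ℕ → ℝ := fun k => γ.arclen (t (min k n)) with hcdef
    have hcmono : Monotone c := fun j k hjk =>
      Curve.arclen_mono hrect (htmem _ (min_le_right _ _)).1
        (tmono (min_le_min hjk le_rfl)) (htmem _ (min_le_right _ _)).2
    have hck : ∀ k, k ≤ n → c k = γ.arclen (t k) := by
      intro k hk; rw [hcdef]; simp [min_eq_left hk]
    calc ENNReal.ofReal (dist (h (γ.toFun γ.a)) (h (γ.toFun γ.b)))
        = ENNReal.ofReal (dist (h (γ.toFun (t 0))) (h (γ.toFun (t n)))) := by rw [ht0, htn]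
      _ ≤ ENNReal.ofReal (∑ k ∈ Finset.range n,
            dist (h (γ.toFun (t k))) (h (γ.toFun (t (k + 1))))) :=
          ENNReal.ofReal_le_ofReal (dist_le_range_sum_dist (fun k => h (γ.toFun (t k))) n)
      _ = ∑ k ∈ Finset.range n,
            ENNReal.ofReal (dist (h (γ.toFun (t k))) (h (γ.toFun (t (k + 1))))) :=
          ENNReal.ofReal_sum_of_nonneg fun _ _ => dist_nonneg
      _ ≤ ∑ k ∈ Finset.range n, ∫⁻ u in Set.Ioc (c k) (c (k + 1)), G (γ.unitParam u) := by
          refine Finset.sum_le_sum fun k hk => ?_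
          have hkn := Finset.mem_range.mp hk
          rw [hck k hkn.le, hck (k + 1) hkn]
          exact hpiece k hkn
      _ = ∫⁻ u in Set.Ioc (c 0) (c n), G (γ.unitParam u) := lintegral_Ioc_sum _ hcmono n
      _ = ∫⁻ u in Set.Ioc 0 γ.length, G (γ.unitParam u) := by
          rw [hck 0 n.zero_le, hck n le_rfl, ht0, htn, γ.arclen_a, γ.arclen_b]
      _ = γ.pathIntegral G := (γ.pathIntegral_Ioc G).symm
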